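/- For all j_c > 0 and γ > 0, the map Λ_γ : ℝ³ → ℝ³ is Lipschitz continuous with Lipschitz constant 2 j_c γ, i.e. |Λ_γ(e₁) − Λ_γ(e₂)| ≤ 2 j_c γ |e₁ − e₂| for all e₁, e₂ ∈ ℝ³. -/

import Mathlib

open scoped RealInnerProductSpace Topology

/-- Moreau-Yosida regularization of the max-function `x ↦ max{1, x}`. -/
noncomputable def maxReg (γ x : ℝ) : ℝ :=
  if 1 / (2 * γ) ≤ x - 1 then x
  else if x - 1 ≤ -(1 / (2 * γ)) then 1
  else 1 + γ / 2 * (x - 1 + 1 / (2 * γ)) ^ 2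

abbrev E3 := EuclideanSpace ℝ (Fin 3)

/-- The regularized dual-variable map `Λ_γ(e) = j_c γ e / max_γ{1, γ|e|}`. -/
noncomputable def Lam (jc γ : ℝ) (e : E3) : E3 :=
  (jc * γ / maxReg γ (γ * ‖e‖)) • e

private lemma hga (γ : ℝ) (hγ : 0 < γ) : γ * (1 / (2 * γ)) = 1 / 2 := by
  field_simp

lemma maxReg_ge_one (γ x : ℝ) (hγ : 0 < γ) : 1 ≤ maxReg γ x := by
  have ha : 0 < 1 / (2 * γ) := by positivity
  unfold maxReg
  split_ifs with h1 h2
  · linarith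
  · linarith
  · nlinarith [sq_nonneg (x - 1 + 1 / (2 * γ))]

lemma maxReg_ge (γ x : ℝ) (hγ : 0 < γ) : x ≤ maxReg γ x := by
  have ha : 0 < 1 / (2 * γ) := by positivity
  have h := hga γ hγ
  unfold maxReg
  split_ifs with h1 h2
  · linarith
  · linarith
  · nlinarith [sq_nonneg (x - 1 - 1 / (2 * γ))]

lemma maxReg_mono (γ x y : ℝ) (hγ : 0 < γ) (hxy : x ≤ y) :
    maxReg γ x ≤ maxReg γ y := by
  have ha : 0 < 1 / (2 * γ) := by positivity
  have h := hga γ hγ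
  unfold maxReg
  split_ifs with h1 h2 h3 h4 h5 h6 h7 h8
  · linarith
  · linarith
  · nlinarith [sq_nonneg (y - 1 - 1/(2*γ))]
  · linarith
  · linarith
  · nlinarith [sq_nonneg (y - 1 + 1/(2*γ))]
  · nlinarith [mul_nonneg (by linarith : (0:ℝ) ≤ x - 1 + 1/(2*γ))
      (by linarith : (0:ℝ) ≤ 2 * (1/(2*γ)) - (x - 1 + 1/(2*γ)))]
  · linarith
  · nlinarith [mul_nonneg (by linarith : (0:ℝ) ≤ y - x)
      (by linarith : (0:ℝ) ≤ x + y - 2 + 2 * (1/(2*γ)))]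

lemma maxReg_sub_le (γ x y : ℝ) (hγ : 0 < γ) (hxy : x ≤ y) :
    maxReg γ y ≤ maxReg γ x + (y - x) := by
  have ha : 0 < 1 / (2 * γ) := by positivity
  have h := hga γ hγ
  unfold maxReg
  split_ifs with h1 h2 h3 h4 h5 h6 h7 h8
  · linarith
  · linarith
  · nlinarith [sq_nonneg (x - 1 - 1/(2*γ))]
  · linarith
  · linarith
  · nlinarith [sq_nonneg (x - 1 + 1/(2*γ))]
  · linarith
  · nlinarith [mul_nonneg (by linarith : (0:ℝ) ≤ y - 1 + 1/(2*γ))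
      (by linarith : (0:ℝ) ≤ 2 * (1/(2*γ)) - (y - 1 + 1/(2*γ)))]
  · nlinarith [mul_nonneg (by linarith : (0:ℝ) ≤ y - x)
      (by linarith : (0:ℝ) ≤ 4 * (1/(2*γ)) - (x + y - 2 + 2 * (1/(2*γ))))]

lemma maxReg_lip (γ x y : ℝ) (hγ : 0 < γ) : |maxReg γ x - maxReg γ y| ≤ |x - y| := by
  rcases le_total x y with hxy | hxy
  · rw [abs_of_nonpos (by linarith [maxReg_mono γ x y hγ hxy]),
      abs_of_nonpos (by linarith)]
    linarith [maxReg_sub_le γ x y hγ hxy]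
  · rw [abs_of_nonneg (by linarith [maxReg_mono γ y x hγ hxy]),
      abs_of_nonneg (by linarith)]
    linarith [maxReg_sub_le γ y x hγ hxy]

/-- `Λ_γ` is Lipschitz continuous with constant `2 j_c γ`. -/
theorem Lam_lipschitz (jc γ : ℝ) (hjc : 0 < jc) (hγ : 0 < γ) (e₁ e₂ : E3) :
    ‖Lam jc γ e₁ - Lam jc γ e₂‖ ≤ 2 * jc * γ * ‖e₁ - e₂‖ := by
  set m₁ := maxReg γ (γ * ‖e₁‖) with hm₁
  set m₂ := maxReg γ (γ * ‖e₂‖) with hm₂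
  have h1 : (1:ℝ) ≤ m₁ := maxReg_ge_one _ _ hγ
  have h2 : (1:ℝ) ≤ m₂ := maxReg_ge_one _ _ hγ
  have hg2 : γ * ‖e₂‖ ≤ m₂ := maxReg_ge _ _ hγ
  have hp1 : (0:ℝ) < m₁ := by linarith
  have hp2 : (0:ℝ) < m₂ := by linarith
  set c := jc * γ with hc
  have hcpos : (0:ℝ) < c := by rw [hc]; positivity
  have key : Lam jc γ e₁ - Lam jc γ e₂
      = (c / m₁) • (e₁ - e₂) + (c / m₁ - c / m₂) • e₂ := by
    simp only [Lam, ← hm₁, ← hm₂, ← hc, smul_sub, sub_smul]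
    abel
  rw [key]
  have hlip : |γ * ‖e₁‖ - γ * ‖e₂‖| ≤ γ * ‖e₁ - e₂‖ := by
    rw [← mul_sub, abs_mul, abs_of_pos hγ]
    exact mul_le_mul_of_nonneg_left (abs_norm_sub_norm_le _ _) hγ.le
  have hm : |m₂ - m₁| ≤ γ * ‖e₁ - e₂‖ := by
    rw [abs_sub_comm]; exact (maxReg_lip γ _ _ hγ).trans hlip
  have hA : ‖(c / m₁) • (e₁ - e₂)‖ ≤ c * ‖e₁ - e₂‖ := by
    rw [norm_smul, Real.norm_eq_abs, abs_of_pos (div_pos hcpos hp1)]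
    apply mul_le_mul_of_nonneg_right _ (norm_nonneg _)
    rw [div_le_iff₀ hp1]; nlinarith
  have hB : ‖(c / m₁ - c / m₂) • e₂‖ ≤ c * ‖e₁ - e₂‖ := by
    rw [norm_smul, Real.norm_eq_abs]
    have heq : c / m₁ - c / m₂ = c * (m₂ - m₁) / (m₁ * m₂) := by
      field_simp
    rw [heq, abs_div, abs_mul, abs_of_pos hcpos, abs_of_pos (mul_pos hp1 hp2),
      div_mul_eq_mul_div, div_le_iff₀ (mul_pos hp1 hp2)]
    calc c * |m₂ - m₁| * ‖e₂‖ ≤ c * (γ * ‖e₁ - e₂‖) * ‖e₂‖ := by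
          apply mul_le_mul_of_nonneg_right _ (norm_nonneg _)
          exact mul_le_mul_of_nonneg_left hm hcpos.le
      _ = c * ‖e₁ - e₂‖ * (γ * ‖e₂‖) := by ring
      _ ≤ c * ‖e₁ - e₂‖ * m₂ :=
          mul_le_mul_of_nonneg_left hg2 (mul_nonneg hcpos.le (norm_nonneg _))
      _ ≤ c * ‖e₁ - e₂‖ * (m₁ * m₂) :=
          mul_le_mul_of_nonneg_left (le_mul_of_one_le_left hp2.le h1)
            (mul_nonneg hcpos.le (norm_nonneg _))
  calc ‖(c / m₁) • (e₁ - e₂) + (c / m₁ - c / m₂) • e₂‖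
      ≤ ‖(c / m₁) • (e₁ - e₂)‖ + ‖(c / m₁ - c / m₂) • e₂‖ := norm_add_le _ _
    _ ≤ c * ‖e₁ - e₂‖ + c * ‖e₁ - e₂‖ := add_le_add hA hB
    _ = 2 * jc * γ * ‖e₁ - e₂‖ := by rw [hc]; ring
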